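/- Let a = (a_1, …, a_{m+1}) and b = (b_1, …, b_{m+1}) be injective sequences of real numbers (m ≥ 1) such that R(a_1, …, a_m) = R(b_1, …, b_m), R(a_2, …, a_{m+1}) = R(b_2, …, b_{m+1}), and a_1 < a_{m+1} holds exactly when b_1 < b_{m+1}. Then R(a) = R(b). (Hence a relative order of length m+1 is uniquely determined by its prefix order-preserving pattern, its suffix order-preserving pattern, and the comparison between its first and last entries.) -/

import Mathlib

/-- The rank of the `i`-th entry of a finite sequence `a`:
`rank_a(a_i) = 1 + |{j : a_j < a_i}|`. -/
noncomputable def rankOf {m : ℕ} (a : Fin m → ℝ) (i : Fin m) : ℕ :=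
  1 + (Finset.univ.filter fun j => a j < a i).card

/-- The relative order `R(a) = (rank_a(a_1), …, rank_a(a_m))`. -/
noncomputable def relOrder {m : ℕ} (a : Fin m → ℝ) : Fin m → ℕ :=
  fun i => rankOf a i

lemma rank_lt_rank_iff {m : ℕ} (a : Fin m → ℝ) (i j : Fin m) :
    rankOf a i < rankOf a j ↔ a i < a j := by
  unfold rankOf
  constructor
  · intro h
    by_contra hle
    push_neg at hle
    have hsub : (Finset.univ.filter fun k => a k < a j) ⊆
        (Finset.univ.filter fun k => a k < a i) := by
      intro k hk
      simp only [Finset.mem_filter, Finset.mem_univ, true_and] at hk ⊢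
      exact lt_of_lt_of_le hk hle
    have := Finset.card_le_card hsub
    omega
  · intro h
    have hss : (Finset.univ.filter fun k => a k < a i) ⊂
        (Finset.univ.filter fun k => a k < a j) := by
      constructor
      · intro k hk
        simp only [Finset.mem_filter, Finset.mem_univ, true_and] at hk ⊢
        exact lt_trans hk h
      · intro hsub
        have := hsub (by simp [h] : i ∈ Finset.univ.filter fun k => a k < a j)
        simp at this
    have := Finset.card_lt_card hss
    omega

lemma cmp_of_relOrder {n : ℕ} {a b : Fin n → ℝ} (h : relOrder a = relOrder b)
    (i j : Fin n) : a i < a j ↔ b i < b j := by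
  rw [← rank_lt_rank_iff a, ← rank_lt_rank_iff b,
    show rankOf a i = rankOf b i from congrFun h i,
    show rankOf a j = rankOf b j from congrFun h j]

/-- For injective sequences `a, b` of length `m + 1` (with `m ≥ 1`), if the relative
orders of their length-`m` prefixes agree, the relative orders of their length-`m`
suffixes agree, and `a_1 < a_{m+1}` holds exactly when `b_1 < b_{m+1}`, then
`R(a) = R(b)`. -/
theorem relOrder_eq_of_prefix_suffix_ends {m : ℕ} (hm : 1 ≤ m) (a b : Fin (m + 1) → ℝ)
    (ha : Function.Injective a) (hb : Function.Injective b)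
    (hpre : relOrder (fun i : Fin m => a i.castSucc) = relOrder (fun i : Fin m => b i.castSucc))
    (hsuf : relOrder (fun i : Fin m => a i.succ) = relOrder (fun i : Fin m => b i.succ))
    (hends : a 0 < a (Fin.last m) ↔ b 0 < b (Fin.last m)) :
    relOrder a = relOrder b := by
  have hpre' := cmp_of_relOrder hpre
  have hsuf' := cmp_of_relOrder hsuf
  have hlast0 : (Fin.last m : Fin (m + 1)) ≠ 0 := by
    simp only [ne_eq, Fin.ext_iff, Fin.val_last, Fin.val_zero]
    omega
  have key : ∀ i j : Fin (m + 1), a i < a j ↔ b i < b j := by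
    intro i j
    rcases eq_or_ne i (Fin.last m) with rfl | hi
    · rcases eq_or_ne j (Fin.last m) with rfl | hj
      · simp
      · rcases eq_or_ne j 0 with rfl | hj0
        · have hane : a (Fin.last m) ≠ a 0 := fun h => hlast0 (ha h)
          have hbne : b (Fin.last m) ≠ b 0 := fun h => hlast0 (hb h)
          constructor
          · intro h
            have h1 : ¬ a 0 < a (Fin.last m) := not_lt_of_gt h
            have h2 : ¬ b 0 < b (Fin.last m) := fun hc => h1 (hends.mpr hc)
            rcases lt_or_gt_of_ne hbne with h' | h'
            · exact h'
            · exact absurd h' h2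
          · intro h
            have h1 : ¬ b 0 < b (Fin.last m) := not_lt_of_gt h
            have h2 : ¬ a 0 < a (Fin.last m) := fun hc => h1 (hends.mp hc)
            rcases lt_or_gt_of_ne hane with h' | h'
            · exact h'
            · exact absurd h' h2
        · obtain ⟨i', hi'⟩ := Fin.eq_succ_of_ne_zero hlast0
          obtain ⟨j', rfl⟩ := Fin.eq_succ_of_ne_zero hj0
          rw [hi']
          exact hsuf' i' j'
    · rcases eq_or_ne j (Fin.last m) with rfl | hj
      · rcases eq_or_ne i 0 with rfl | hi0
        · exact hends
        · obtain ⟨j', hj'⟩ := Fin.eq_succ_of_ne_zero hlast0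
          obtain ⟨i', rfl⟩ := Fin.eq_succ_of_ne_zero hi0
          rw [hj']
          exact hsuf' i' j'
      · obtain ⟨i', rfl⟩ := Fin.exists_castSucc_eq.mpr hi
        obtain ⟨j', rfl⟩ := Fin.exists_castSucc_eq.mpr hj
        exact hpre' i' j'
  funext i
  show rankOf a i = rankOf b i
  unfold rankOf
  congr 1
  congr 1
  ext j
  simp [key]
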